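/- Let h(x) = -x·log(x) - (1-x)·log(1-x) be the binary entropy function on [0,1/2], and let h^{-1} denote its inverse mapping [0, log 2] to [0, 1/2]. Then as ε → 0+, h^{-1}(log 2 - ε) = 1/2 - (1/√2)·√ε + O(ε^{3/2}). Equivalently, there exist constants C, ε₀ > 0 such that for all 0 < ε < ε₀, |h^{-1}(log 2 - ε) - (1/2 - √(ε/2))| ≤ C·ε^{3/2}. -/

import Mathlib

open Real Set

noncomputable def fAux (u : ℝ) : ℝ := ((1-u) * Real.log (1-u) + (1+u) * Real.log (1+u)) / 2

lemma fAux_hasDeriv {u : ℝ} (h : |u| < 1) :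
    HasDerivAt fAux ((Real.log (1+u) - Real.log (1-u)) / 2) u := by
  obtain ⟨hl, hr⟩ := abs_lt.1 h
  have h1 : (0:ℝ) < 1 - u := by linarith
  have h2 : (0:ℝ) < 1 + u := by linarith
  have hl1 : HasDerivAt (fun v : ℝ => Real.log (1-v)) (-(1-u)⁻¹) u := by
    have := (Real.hasDerivAt_log h1.ne').comp u
      (((hasDerivAt_id u).const_sub 1) : HasDerivAt (fun v : ℝ => 1 - v) (-1) u)
    simpa [Function.comp_def] using this
  have hl2 : HasDerivAt (fun v : ℝ => Real.log (1+v)) ((1+u)⁻¹) u := by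
    have := (Real.hasDerivAt_log h2.ne').comp u
      (((hasDerivAt_id u).const_add 1) : HasDerivAt (fun v : ℝ => 1 + v) 1 u)
    simpa [Function.comp_def] using this
  have d1 : HasDerivAt (fun v : ℝ => (1-v) * Real.log (1-v)) (-Real.log (1-u) - 1) u := by
    have := (((hasDerivAt_id u).const_sub 1) : HasDerivAt (fun v : ℝ => 1 - v) (-1) u).mul hl1
    refine this.congr_deriv ?_
    simp only [id_eq]
    field_simp
    ring
  have d2 : HasDerivAt (fun v : ℝ => (1+v) * Real.log (1+v)) (Real.log (1+u) + 1) u := by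
    have := (((hasDerivAt_id u).const_add 1) : HasDerivAt (fun v : ℝ => 1 + v) 1 u).mul hl2
    refine this.congr_deriv ?_
    simp only [id_eq]
    field_simp
  have := (d1.add d2).div_const 2
  refine this.congr_deriv ?_
  ring

lemma deriv_bound' {u : ℝ} (h0 : 0 ≤ u) (h1 : u ≤ 1/10) :
    u ≤ (Real.log (1+u) - Real.log (1-u))/2 ∧ (Real.log (1+u) - Real.log (1-u))/2 ≤ u + u^3 := by
  have hu1 : |u| < 1 := by rw [abs_of_nonneg h0]; linarith
  have hu1' : |(-u)| < 1 := by rwa [abs_neg]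
  have hA := Real.abs_log_sub_add_sum_range_le hu1 3
  have hB := Real.abs_log_sub_add_sum_range_le hu1' 3
  rw [abs_of_nonneg h0] at hA
  rw [abs_neg, abs_of_nonneg h0] at hB
  simp [Finset.sum_range_succ] at hA hB
  have h9 : u^4/(1-u) ≤ u^3/9 := by
    rw [div_le_iff₀ (by linarith)]
    nlinarith [pow_nonneg h0 3, pow_nonneg h0 4]
  have hA' := abs_le.1 hA
  have hB' := abs_le.1 hB
  constructor <;> nlinarith [hA'.1, hA'.2, hB'.1, hB'.2]

lemma fAux_bounds {u : ℝ} (h0 : 0 ≤ u) (h1 : u ≤ 1/10) :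
    u^2/2 ≤ fAux u ∧ fAux u ≤ u^2/2 + u^4/4 := by
  have habs : ∀ v ∈ Set.Icc (0:ℝ) (1/10), |v| < 1 := by
    intro v hv; rw [abs_lt]; exact ⟨by linarith [hv.1], by linarith [hv.2]⟩
  have hsq : ∀ v : ℝ, HasDerivAt (fun w : ℝ => w^2/2) v v := by
    intro v
    have := (hasDerivAt_pow 2 v).div_const 2
    refine this.congr_deriv ?_; push_cast; ring
  have hq : ∀ v : ℝ, HasDerivAt (fun w : ℝ => w^2/2 + w^4/4) (v + v^3) v := by
    intro v
    have h4 := (hasDerivAt_pow 4 v).div_const 4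
    have := (hsq v).add h4
    refine this.congr_deriv ?_; push_cast; ring
  have hd1 : ∀ v ∈ Set.Icc (0:ℝ) (1/10),
      HasDerivAt (fun w => fAux w - w^2/2) ((Real.log (1+v) - Real.log (1-v))/2 - v) v :=
    fun v hv => (fAux_hasDeriv (habs v hv)).sub (hsq v)
  have hd2 : ∀ v ∈ Set.Icc (0:ℝ) (1/10),
      HasDerivAt (fun w => w^2/2 + w^4/4 - fAux w)
        (v + v^3 - (Real.log (1+v) - Real.log (1-v))/2) v :=
    fun v hv => (hq v).sub (fAux_hasDeriv (habs v hv))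
  have mono1 : MonotoneOn (fun w => fAux w - w^2/2) (Set.Icc (0:ℝ) (1/10)) := by
    apply monotoneOn_of_deriv_nonneg (convex_Icc _ _)
    · exact fun v hv => (hd1 v hv).continuousAt.continuousWithinAt
    · intro v hv
      rw [interior_Icc] at hv
      exact (hd1 v ⟨hv.1.le, hv.2.le⟩).differentiableAt.differentiableWithinAt
    · intro v hv
      rw [interior_Icc] at hv
      rw [(hd1 v ⟨hv.1.le, hv.2.le⟩).deriv]
      have := (deriv_bound' hv.1.le hv.2.le).1
      linarith
  have mono2 : MonotoneOn (fun w => w^2/2 + w^4/4 - fAux w) (Set.Icc (0:ℝ) (1/10)) := by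
    apply monotoneOn_of_deriv_nonneg (convex_Icc _ _)
    · exact fun v hv => (hd2 v hv).continuousAt.continuousWithinAt
    · intro v hv
      rw [interior_Icc] at hv
      exact (hd2 v ⟨hv.1.le, hv.2.le⟩).differentiableAt.differentiableWithinAt
    · intro v hv
      rw [interior_Icc] at hv
      rw [(hd2 v ⟨hv.1.le, hv.2.le⟩).deriv]
      have := (deriv_bound' hv.1.le hv.2.le).2
      linarith
  have h0m : (0:ℝ) ∈ Set.Icc (0:ℝ) (1/10) := ⟨le_refl 0, by norm_num⟩
  have hum : u ∈ Set.Icc (0:ℝ) (1/10) := ⟨h0, h1⟩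
  have hf0 : fAux 0 = 0 := by simp [fAux]
  have e1 := mono1 h0m hum h0
  have e2 := mono2 h0m hum h0
  simp only [hf0] at e1 e2
  norm_num at e1 e2
  exact ⟨by linarith, by linarith⟩

lemma entropy_eq {t : ℝ} (h0 : 0 ≤ t) (h1 : t < 1/2) :
    Real.log 2 - (-(1/2 - t) * Real.log (1/2 - t) - (1 - (1/2 - t)) * Real.log (1 - (1/2 - t)))
      = fAux (2*t) := by
  have e1 : Real.log (1/2 - t) = Real.log (1 - 2*t) - Real.log 2 := by
    rw [show (1:ℝ)/2 - t = (1-2*t)/2 by ring, Real.log_div (by linarith) two_ne_zero]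
  have e2 : Real.log (1 - (1/2 - t)) = Real.log (1 + 2*t) - Real.log 2 := by
    rw [show (1:ℝ) - (1/2 - t) = (1+2*t)/2 by ring, Real.log_div (by linarith) two_ne_zero]
  simp only [fAux, e1, e2]
  ring

lemma binEntropy_expand (p : ℝ) :
    Real.binEntropy p = -p * Real.log p - (1-p) * Real.log (1-p) := by
  simp [Real.binEntropy, Real.log_inv]; ring

/-- Expansion of the inverse binary entropy near `log 2`: there exist `C, ε₀ > 0` such
that whenever `0 < ε < ε₀` and `x ∈ [0, 1/2]` satisfies `h(x) = log 2 - ε` (where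
`h(x) = -x log x - (1-x) log(1-x)`), one has
`|x - (1/2 - √(ε/2))| ≤ C · ε^(3/2)`. -/
theorem binEntropy_inv_expansion :
    ∃ C ε₀ : ℝ, 0 < C ∧ 0 < ε₀ ∧
      ∀ ε x : ℝ, 0 < ε → ε < ε₀ → x ∈ Set.Icc (0 : ℝ) (1 / 2) →
        -x * Real.log x - (1 - x) * Real.log (1 - x) = Real.log 2 - ε →
        |x - (1 / 2 - Real.sqrt (ε / 2))| ≤ C * ε ^ ((3 : ℝ) / 2) := by
  refine ⟨1, fAux (1/10), one_pos, ?_, ?_⟩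
  · have := (fAux_bounds (u := 1/10) (by norm_num) (by norm_num)).1
    nlinarith
  intro ε x hε hεε₀ hx hEq
  -- Step 1 : x > 9/20
  have h920eq : Real.log 2 - Real.binEntropy (9/20) = fAux (1/10) := by
    rw [binEntropy_expand]
    have := entropy_eq (t := 1/20) (by norm_num) (by norm_num)
    norm_num at this ⊢
    linarith
  have hx920 : 9/20 < x := by
    by_contra hc
    push_neg at hc
    have hmono := Real.binEntropy_strictMonoOn.monotoneOn
      (⟨hx.1, by rw [show ((2:ℝ)⁻¹) = 1/2 by norm_num]; exact hx.2⟩ : x ∈ Set.Icc (0:ℝ) 2⁻¹)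
      (⟨by norm_num, by norm_num⟩ : (9/20:ℝ) ∈ Set.Icc (0:ℝ) 2⁻¹) hc
    rw [binEntropy_expand x] at hmono
    rw [hEq] at hmono
    linarith [hmono, h920eq]
  -- Step 2 : write x = 1/2 - t
  set t : ℝ := 1/2 - x with ht_def
  have ht0 : 0 ≤ t := by simp [ht_def]; linarith [hx.2]
  have ht1 : t < 1/20 := by simp [ht_def]; linarith
  have hεeq : ε = fAux (2*t) := by
    have := entropy_eq ht0 (by linarith)
    rw [show (1:ℝ)/2 - t = x by simp [ht_def]] at this
    rw [hEq] at this
    linarith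
  have hb := fAux_bounds (u := 2*t) (by linarith) (by linarith)
  have hlo : 2*t^2 ≤ ε := by
    rw [hεeq]
    calc 2*t^2 = (2*t)^2/2 := by ring
      _ ≤ fAux (2*t) := hb.1
  have hhi : ε ≤ 2*t^2 + 4*t^4 := by
    rw [hεeq]
    calc fAux (2*t) ≤ (2*t)^2/2 + (2*t)^4/4 := hb.2
      _ = 2*t^2 + 4*t^4 := by ring
  have hs1 : t ≤ Real.sqrt (ε/2) := by
    rw [show t = Real.sqrt (t^2) from (Real.sqrt_sq ht0).symm]
    exact Real.sqrt_le_sqrt (by linarith)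
  have hs2 : Real.sqrt (ε/2) ≤ t + t^3 := by
    have h : ε/2 ≤ (t + t^3)^2 := by nlinarith [pow_nonneg ht0 3, pow_nonneg ht0 4, pow_nonneg ht0 6]
    calc Real.sqrt (ε/2) ≤ Real.sqrt ((t + t^3)^2) := Real.sqrt_le_sqrt h
      _ = t + t^3 := Real.sqrt_sq (by positivity)
  have hse : Real.sqrt (ε/2) ≤ Real.sqrt ε := Real.sqrt_le_sqrt (by linarith)
  have hcube : Real.sqrt ε ^ 3 = ε ^ ((3:ℝ)/2) := by
    rw [Real.sqrt_eq_rpow, ← Real.rpow_natCast (ε ^ ((1:ℝ)/2)) 3, ← Real.rpow_mul hε.le]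
    norm_num
  have ht3 : t^3 ≤ ε ^ ((3:ℝ)/2) := by
    rw [← hcube]
    exact pow_le_pow_left₀ ht0 (le_trans hs1 hse) 3
  have hxe : x - (1/2 - Real.sqrt (ε/2)) = Real.sqrt (ε/2) - t := by
    rw [ht_def]; ring
  rw [hxe, abs_of_nonneg (by linarith), one_mul]
  linarith
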